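/- Let O be a Noetherian local ring and f : X → Spec O a finite type morphism of schemes such that the reduction X_red → Spec k (k the residue field) is finite. If f is universally closed and separated, then for any closed subscheme X' ⊆ X supported on the closed fiber, X' is affine and O_{X'}(X') is a finite O-module. -/

import Mathlib

open IsLocalRing Polynomial

lemma aux_finite_setOf_isMaximal {R : Type*} [CommRing R] [Finite (PrimeSpectrum R)] :
    {J : Ideal R | J.IsMaximal}.Finite :=
  (Set.finite_range (PrimeSpectrum.asIdeal (R := R))).subset
    (fun J hJ => ⟨⟨J, hJ.isPrime⟩, rfl⟩)

lemma aux_bot_isMaximal {D : Type*} [CommRing D] [IsDomain D] [IsJacobsonRing D]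
    [Finite (PrimeSpectrum D)] : (⊥ : Ideal D).IsMaximal := by
  have h0 : (⊥ : Ideal D).jacobson = ⊥ :=
    (isJacobsonRing_iff.mp ‹_›) ⊥ (Ideal.bot_prime.isRadical)
  have hS : {J : Ideal D | J.IsMaximal}.Finite := aux_finite_setOf_isMaximal
  have hsinf : sInf {J : Ideal D | J.IsMaximal} = ⊥ := by
    rw [← h0, Ideal.jacobson]
    congr 1
    ext J
    simp
  rw [← hS.coe_toFinset, ← Finset.inf_id_eq_sInf] at hsinf
  obtain ⟨M, hM, hMle⟩ := (Ideal.IsPrime.inf_le' Ideal.bot_prime).mp hsinf.le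
  have : M = ⊥ := le_bot_iff.mp hMle
  exact this ▸ (hS.mem_toFinset.mp hM)

section
variable {O : Type*} [CommRing O] [IsLocalRing O]
  {R : Type*} [CommRing R] [Algebra O R] [Algebra.FiniteType O R]

lemma aux_jacobson_quot (p : Ideal R) (hp : maximalIdeal O ≤ p.comap (algebraMap O R)) :
    IsJacobsonRing (R ⧸ p) := by
  let k := O ⧸ maximalIdeal O
  let φ : k →+* R ⧸ p := Ideal.quotientMap p (algebraMap O R) hp
  letI : Algebra k (R ⧸ p) := φ.toAlgebra
  haveI : IsScalarTower O k (R ⧸ p) := IsScalarTower.of_algebraMap_eq' (by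
    show algebraMap O (R ⧸ p) = φ.comp (algebraMap O k)
    rw [show (algebraMap O k : O →+* k) = Ideal.Quotient.mk (maximalIdeal O) from rfl,
      Ideal.quotientMap_comp_mk, ← Ideal.Quotient.algebraMap_eq,
      ← IsScalarTower.algebraMap_eq])
  haveI : Algebra.FiniteType O (R ⧸ p) :=
    Algebra.FiniteType.of_surjective (Ideal.Quotient.mkₐ O p)
      Ideal.Quotient.mk_surjective
  haveI : Algebra.FiniteType k (R ⧸ p) :=
    Algebra.FiniteType.of_restrictScalars_finiteType (R := O) (S := k) (A := R ⧸ p)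
  letI : Field k := Ideal.Quotient.field (maximalIdeal O)
  exact isJacobsonRing_of_finiteType (A := k)

lemma aux_quot_max_finite (M : Ideal R) (hM : M.IsMaximal)
    (hle : maximalIdeal O ≤ M.comap (algebraMap O R)) :
    Module.Finite O (R ⧸ M) := by
  let k := O ⧸ maximalIdeal O
  let φ : k →+* R ⧸ M := Ideal.quotientMap M (algebraMap O R) hle
  letI : Algebra k (R ⧸ M) := φ.toAlgebra
  haveI : IsScalarTower O k (R ⧸ M) := IsScalarTower.of_algebraMap_eq' (by
    show algebraMap O (R ⧸ M) = φ.comp (algebraMap O k)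
    rw [show (algebraMap O k : O →+* k) = Ideal.Quotient.mk (maximalIdeal O) from rfl,
      Ideal.quotientMap_comp_mk, ← Ideal.Quotient.algebraMap_eq,
      ← IsScalarTower.algebraMap_eq])
  haveI : Algebra.FiniteType O (R ⧸ M) :=
    Algebra.FiniteType.of_surjective (Ideal.Quotient.mkₐ O M)
      Ideal.Quotient.mk_surjective
  haveI : Algebra.FiniteType k (R ⧸ M) :=
    Algebra.FiniteType.of_restrictScalars_finiteType (R := O) (S := k) (A := R ⧸ M)
  haveI := hM
  letI : Field (R ⧸ M) := Ideal.Quotient.field M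
  letI : Field k := Ideal.Quotient.field (maximalIdeal O)
  haveI : Module.Finite k (R ⧸ M) := finite_of_finite_type_of_isJacobsonRing k (R ⧸ M)
  haveI : Module.Finite O k :=
    Module.Finite.of_surjective (Ideal.Quotient.mkₐ O (maximalIdeal O)).toLinearMap
      Ideal.Quotient.mk_surjective
  exact Module.Finite.trans k (R ⧸ M)

lemma aux_isMaximal [Finite (PrimeSpectrum R)]
    (hO : ∀ q : PrimeSpectrum R, q.asIdeal.comap (algebraMap O R) = maximalIdeal O)
    (p : Ideal R) (hp : p.IsPrime) : p.IsMaximal := by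
  have hle : maximalIdeal O ≤ p.comap (algebraMap O R) := (hO ⟨p, hp⟩).ge
  haveI : IsJacobsonRing (R ⧸ p) := aux_jacobson_quot p hle
  haveI : Finite (PrimeSpectrum (R ⧸ p)) :=
    Finite.of_injective (PrimeSpectrum.comap (Ideal.Quotient.mk p))
      (PrimeSpectrum.comap_injective_of_surjective _ Ideal.Quotient.mk_surjective)
  haveI := hp
  have hbot : (⊥ : Ideal (R ⧸ p)).IsMaximal := aux_bot_isMaximal
  refine Ideal.Quotient.maximal_of_isField p ?_
  by_contra h
  exact absurd (Ideal.bot_lt_of_maximal ⊥ h) (lt_irrefl _)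

theorem aux_module_finite {O R : Type*} [CommRing O] [IsNoetherianRing O] [IsLocalRing O]
    [CommRing R] [Algebra O R] [Algebra.FiniteType O R] [Finite (PrimeSpectrum R)]
    (hO : ∀ q : PrimeSpectrum R, q.asIdeal.comap (algebraMap O R) = maximalIdeal O) :
    Module.Finite O R := by
  haveI : IsNoetherianRing R := Algebra.FiniteType.isNoetherianRing O R
  have hmax := aux_isMaximal hO
  haveI : Algebra.IsIntegral O R := by
    rw [Algebra.isIntegral_def]
    intro x
    have hS : {J : Ideal R | J.IsMaximal}.Finite := aux_finite_setOf_isMaximal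
    haveI hmax' : ∀ J : hS.toFinset, (J.1 : Ideal R).IsMaximal :=
      fun J => hS.mem_toFinset.mp J.2
    haveI : ∀ J : hS.toFinset, Module.Finite O (R ⧸ (J.1 : Ideal R)) := fun J =>
      aux_quot_max_finite J.1 (hmax' J) (hO ⟨J.1, (hmax' J).isPrime⟩).ge
    haveI : Module.Finite O (Π J : hS.toFinset, R ⧸ (J.1 : Ideal R)) := Module.Finite.pi
    let ψ : R →ₐ[O] Π J : hS.toFinset, R ⧸ (J.1 : Ideal R) :=
      Pi.algHom O _ (fun J => Ideal.Quotient.mkₐ O J.1)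
    obtain ⟨g, hgmonic, hgeval⟩ := IsIntegral.of_finite O (ψ x)
    have hmem : ∀ J : hS.toFinset, (aeval x g : R) ∈ (J.1 : Ideal R) := by
      intro J
      have h2 := congrArg (Pi.evalAlgHom O _ J) (show aeval (ψ x) g = 0 by
        rwa [aeval_def])
      rw [← aeval_algHom_apply, map_zero] at h2
      rw [← Ideal.Quotient.eq_zero_iff_mem]
      show Ideal.Quotient.mkₐ O (J.1 : Ideal R) (aeval x g) = 0
      rw [← aeval_algHom_apply]
      exact h2
    have hnil : IsNilpotent (aeval x g : R) := by
      rw [← mem_nilradical, nilradical_eq_sInf, Ideal.mem_sInf]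
      intro J hJ
      exact hmem ⟨J, hS.mem_toFinset.mpr (hmax J hJ)⟩
    obtain ⟨n, hn⟩ := hnil
    refine ⟨g ^ n, hgmonic.pow n, ?_⟩
    rw [← aeval_def, map_pow, hn]
  exact Algebra.IsIntegral.finite
end

open AlgebraicGeometry CategoryTheory IsLocalRing

section SchemeAux

lemma exists_sigmaι_eq.{u} {ι : Type u} (F : ι → Scheme.{u}) (p : (∐ F : Scheme)) :
    ∃ i x, (Limits.Sigma.ι F i).base x = p := by
  obtain ⟨⟨i, x⟩, rfl⟩ := (sigmaMk F).surjective p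
  exact ⟨i, x, (sigmaMk_mk F i x).symm⟩

variable {O : Type} [CommRing O] [IsLocalRing O]

lemma aux_chart_isMaximal {X : AlgebraicGeometry.Scheme}
    (f : X ⟶ Spec (CommRingCat.of O)) [LocallyOfFiniteType f]
    (hred : ∀ x : X, f.base x = closedPoint O) (hfin : Finite X)
    {R : CommRingCat} (g : Spec R ⟶ X) [IsOpenImmersion g] :
    ∀ p : PrimeSpectrum R, p.asIdeal.IsMaximal := by
  let φ : CommRingCat.of O ⟶ R := Spec.preimage (g ≫ f)
  haveI : LocallyOfFiniteType (Spec.map φ) := by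
    rw [Spec.map_preimage]; infer_instance
  have hft : RingHom.FiniteType φ.hom := HasRingHomProperty.Spec_iff.mp this
  letI : Algebra O R := RingHom.toAlgebra φ.hom
  haveI : Algebra.FiniteType O R := hft
  haveI : Finite (PrimeSpectrum R) :=
    Finite.of_injective (fun p : PrimeSpectrum R => g.base p)
      g.isOpenEmbedding.injective
  have hO : ∀ q : PrimeSpectrum R, q.asIdeal.comap (algebraMap O R) = maximalIdeal O := by
    intro q
    have h2 : (Spec.map φ).base q = f.base (g.base q) := by
      rw [Spec.map_preimage]; exact Scheme.Hom.comp_apply g f q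
    have h3 : PrimeSpectrum.comap φ.hom q = closedPoint O := by
      change (Spec.map φ).base q = _; rw [h2, hred]
    exact congrArg PrimeSpectrum.asIdeal h3
  exact fun p => aux_isMaximal hO p.asIdeal p.isPrime

lemma aux_discrete {X : AlgebraicGeometry.Scheme}
    (f : X ⟶ Spec (CommRingCat.of O)) [LocallyOfFiniteType f]
    (hred : ∀ x : X, f.base x = closedPoint O) (hfin : Finite X) :
    DiscreteTopology X := by
  haveI : T1Space X := by
    constructor
    intro x
    apply isClosed_of_closure_subset
    intro y hy
    have hxy : x ⤳ y := specializes_iff_mem_closure.mpr hy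
    let 𝒰 := X.affineOpenCover
    let j := 𝒰.idx y
    obtain ⟨y'0, hy'⟩ := 𝒰.covers y
    let y' : PrimeSpectrum (𝒰.X j) := y'0
    have hmax := aux_chart_isMaximal f hred hfin (𝒰.f j)
    have hx : x ∈ Set.range (𝒰.f j).base := by
      refine hxy.mem_open (𝒰.f j).isOpenEmbedding.isOpen_range ?_
      exact ⟨y'0, hy'⟩
    obtain ⟨x'0, hx'⟩ := hx
    let x' : PrimeSpectrum (𝒰.X j) := x'0
    have hsp0 : (𝒰.f j).base x'0 ⤳ (𝒰.f j).base y'0 := by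
      rw [hx', hy']; exact hxy
    have hsp : x' ⤳ y' :=
      ((𝒰.f j).isOpenEmbedding.toIsEmbedding.toIsInducing.specializes_iff).mp hsp0
    have hle : x' ≤ y' := (PrimeSpectrum.le_iff_specializes x' y').mpr hsp
    have heq : x' = y' := PrimeSpectrum.ext ((hmax x').eq_of_le y'.isPrime.ne_top hle)
    show y = x
    have : (𝒰.f j).base x'0 = (𝒰.f j).base y'0 := congrArg _ heq
    rw [← hy', ← this, hx']
  exact Finite.instDiscreteTopology

lemma aux_isAffine_of_discrete {X : AlgebraicGeometry.Scheme}
    [DiscreteTopology X] [Finite X] : IsAffine X := by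
  let U : X → X.Opens := fun x => ⟨{x}, isOpen_discrete _⟩
  have hU : ∀ x : X, IsAffineOpen (U x) := by
    intro x
    obtain ⟨V, hV, hxV, hVU⟩ := TopologicalSpace.Opens.isBasis_iff_nbhd.mp
      X.isBasis_affineOpens (show x ∈ U x from rfl)
    have : V = U x := le_antisymm hVU (by
      intro y hy
      have : y = x := hy
      subst this; exact hxV)
    rwa [← this]
  haveI : ∀ x : X, IsAffine (U x).toScheme := fun x => hU x
  let g : (∐ fun x : X => (U x).toScheme) ⟶ X := Limits.Sigma.desc fun x => (U x).ι
  have hcomp : ∀ (x : X) (u : (U x).toScheme),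
      g.base ((Limits.Sigma.ι (fun x : X => (U x).toScheme) x).base u) = u.1 := by
    intro x u
    rw [← Scheme.Hom.comp_apply, Limits.Sigma.ι_desc]
    rfl
  have hval : ∀ (x : X) (u : (U x).toScheme),
      g.base ((Limits.Sigma.ι (fun x : X => (U x).toScheme) x).base u) = x := by
    intro x u
    rw [hcomp]
    exact u.2
  have hsurj : Function.Surjective g.base := by
    intro x
    exact ⟨(Limits.Sigma.ι (fun x : X => (U x).toScheme) x).base ⟨x, rfl⟩, hval x ⟨x, rfl⟩⟩
  have hinj : Function.Injective g.base := by
    intro p q hpq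
    obtain ⟨x, u, rfl⟩ := exists_sigmaι_eq (fun x : X => (U x).toScheme) p
    obtain ⟨y, v, rfl⟩ := exists_sigmaι_eq (fun x : X => (U x).toScheme) q
    have hxy : x = y := by rw [← hval x u, ← hval y v, hpq]
    subst hxy
    have huv : u = v := Subtype.ext (by
      have h1 := (hcomp x u).symm.trans (hpq.trans (hcomp x v))
      exact h1)
    rw [huv]
  haveI : ∀ p, IsIso (g.stalkMap p) := by
    intro p
    obtain ⟨x, u, rfl⟩ := exists_sigmaι_eq (fun x : X => (U x).toScheme) p
    have h1 : IsIso (((Limits.Sigma.ι (fun x : X => (U x).toScheme) x) ≫ g).stalkMap u) := by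
      rw [Limits.Sigma.ι_desc]; infer_instance
    rw [Scheme.Hom.stalkMap_comp] at h1
    exact @IsIso.of_isIso_comp_right _ _ _ _ _ _ ((Limits.Sigma.ι (fun x : X => (U x).toScheme) x).stalkMap u) inferInstance h1
  haveI : IsOpenImmersion g := by
    apply IsOpenImmersion.of_isIso_stalkMap
    exact Topology.IsOpenEmbedding.of_continuous_injective_isOpenMap
      g.base.hom.continuous hinj (fun s _ => isOpen_discrete _)
  haveI : Epi g.base := (TopCat.epi_iff_surjective _).mpr hsurj
  haveI : IsIso g := IsOpenImmersion.isIso g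
  exact IsAffine.of_isIso (inv g)

end SchemeAux
theorem closed_subscheme_finite_over_local_ring
    {O : Type} [CommRing O] [IsNoetherianRing O] [IsLocalRing O]
    {X : AlgebraicGeometry.Scheme} (f : X ⟶ Spec (CommRingCat.of O))
    [LocallyOfFiniteType f] [QuasiCompact f] [IsSeparated f] [UniversallyClosed f]
    (hred : ∀ x : X, f.base x = IsLocalRing.closedPoint O)
    (hfin : Finite X)
    {X' : AlgebraicGeometry.Scheme} (i : X' ⟶ X) [IsClosedImmersion i]
    (hsupp : ∀ x : X', f.base (i.base x) = IsLocalRing.closedPoint O) :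
    IsFinite (i ≫ f) := by
  haveI : DiscreteTopology X := aux_discrete f hred hfin
  haveI : IsAffine X := aux_isAffine_of_discrete
  haveI hQ : IsFinite f := by
    haveI := IsFinite.instHasAffinePropertyAndIsAffineFiniteCarrierObjOppositeOpensCarrierCarrierCommRingCatPresheafOpOpensTopHomAppTop
    rw [@HasAffineProperty.iff_of_isAffine _ _ this _ _ f _]
    refine ⟨inferInstance, ?_⟩
    haveI : IsLocalRing ↥(CommRingCat.of O) := ‹IsLocalRing O›
    let e := Scheme.ΓSpecIso (CommRingCat.of O)
    let ψ : CommRingCat.of O ⟶ Γ(X, ⊤) := e.inv ≫ f.appTop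
    have hψ : RingHom.Finite ψ.hom := by
      have hft : RingHom.FiniteType f.appTop.hom :=
        HasRingHomProperty.appTop (P := @LocallyOfFiniteType) (f := f) ‹_›
      have hftψ : RingHom.FiniteType ψ.hom :=
        (RingHom.finiteType_respectsIso.cancel_left_isIso e.inv f.appTop).mpr hft
      haveI : IsNoetherianRing ↥(CommRingCat.of O) := ‹IsNoetherianRing O›
      letI : Algebra ↥(CommRingCat.of O) ↥Γ(X, ⊤) := RingHom.toAlgebra ψ.hom
      haveI : Algebra.FiniteType ↥(CommRingCat.of O) ↥Γ(X, ⊤) := hftψ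
      haveI : Finite (PrimeSpectrum Γ(X, ⊤)) :=
        Finite.of_surjective
          (fun x : X => (X.isoSpec.hom.base x : PrimeSpectrum Γ(X, ⊤)))
          (Scheme.homeoOfIso X.isoSpec).surjective
      have hspec : Spec.map ψ = X.isoSpec.inv ≫ f := by
        rw [Spec.map_comp]
        show Spec.map f.appTop ≫ Spec.map e.inv = _
        rw [← Scheme.isoSpec_Spec_inv, Scheme.isoSpec_inv_naturality]
      have hO : ∀ q : PrimeSpectrum ↥Γ(X, ⊤),
          q.asIdeal.comap (algebraMap ↥(CommRingCat.of O) ↥Γ(X, ⊤))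
            = IsLocalRing.maximalIdeal ↥(CommRingCat.of O) := by
        intro q
        have h1 : (Spec.map ψ).base q = IsLocalRing.closedPoint ↥(CommRingCat.of O) := by
          rw [hspec]
          exact hred _
        exact congrArg PrimeSpectrum.asIdeal h1
      exact aux_module_finite hO
    have hfapp : f.appTop = e.hom ≫ ψ := by simp [ψ, e]
    rw [hfapp]
    exact (RingHom.finite_respectsIso.cancel_left_isIso e.hom ψ).mpr hψ
  infer_instance
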